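/- Let θ_1 ≤ λ_1 ≤ λ_2 ≤ θ_2 be positive reals with λ_1+λ_2 = θ_1+θ_2, and let 0 < a < 1 with θ_1 < aλ_1. Define V(x) = F̄_Y(x) - F̄_X(ax). Then, as x traverses [0,∞), V changes sign at most once, and if a sign change occurs it is from negative to positive. -/

import Mathlib

open Real Set

noncomputable def fE (u : ℝ) : ℝ := (Real.exp u - 1)⁻¹

noncomputable def LL (u : ℝ) : ℝ := Real.log (1 - Real.exp (-u))

lemma expm1_pos {u : ℝ} (hu : 0 < u) : 0 < Real.exp u - 1 := by
  have : (1:ℝ) < Real.exp u := by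
    rw [← Real.exp_zero]; exact Real.exp_lt_exp.2 hu
  linarith

lemma fE_pos {u : ℝ} (hu : 0 < u) : 0 < fE u := inv_pos.2 (expm1_pos hu)

lemma one_sub_exp_neg_pos {u : ℝ} (hu : 0 < u) : 0 < 1 - Real.exp (-u) := by
  have : Real.exp (-u) < Real.exp 0 := Real.exp_lt_exp.2 (by linarith)
  rw [Real.exp_zero] at this
  linarith

lemma core_ineq {u v : ℝ} (hu : 0 < u) (huv : u ≤ v) :
    u * (1 - Real.exp (-v)) ≤ v * (1 - Real.exp (-u)) := by
  have hv : 0 < v := lt_of_lt_of_le hu huv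
  have ha : (0:ℝ) ≤ u / v := by positivity
  have hb : (0:ℝ) ≤ 1 - u / v := by
    rw [sub_nonneg]; exact div_le_one_of_le₀ huv hv.le
  have hcx := convexOn_exp.2 (mem_univ (-v)) (mem_univ (0:ℝ)) ha hb (by ring)
  have h1 : (u/v) • (-v) + (1 - u/v) • (0:ℝ) = -u := by
    simp only [smul_eq_mul, mul_zero, add_zero]
    field_simp
  rw [h1] at hcx
  simp only [smul_eq_mul, Real.exp_zero, mul_one] at hcx
  -- exp (-u) ≤ u/v * exp (-v) + (1 - u/v)
  have hv' : v ≠ 0 := ne_of_gt hv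
  have h3 := mul_le_mul_of_nonneg_left hcx hv.le
  have h4 : v * (u / v * Real.exp (-v) + (1 - u / v)) = u * Real.exp (-v) + (v - u) := by
    field_simp
  rw [h4] at h3
  nlinarith [h3]

lemma core2 {u v : ℝ} (hu : 0 < u) (huv : u ≤ v) :
    u * Real.exp u * (Real.exp v - 1) ≤ v * Real.exp v * (Real.exp u - 1) := by
  have h := core_ineq hu huv
  rw [Real.exp_neg, Real.exp_neg] at h
  have hA := Real.exp_pos u
  have hB := Real.exp_pos v
  have h2 := mul_le_mul_of_nonneg_left h (mul_pos hA hB).le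
  have e1 : Real.exp u * Real.exp v * (u * (1 - (Real.exp v)⁻¹)) =
      u * Real.exp u * (Real.exp v - 1) := by
    field_simp
  have e2 : Real.exp u * Real.exp v * (v * (1 - (Real.exp u)⁻¹)) =
      v * Real.exp v * (Real.exp u - 1) := by
    field_simp
  rw [e1, e2] at h2
  exact h2

lemma ratio_mono {s x t₁ t₂ : ℝ} (hs : 0 < s) (hsx : s ≤ x) (ht₁ : 0 < t₁) (ht : t₁ ≤ t₂) :
    (Real.exp (t₁*x) - 1) * (Real.exp (t₂*s) - 1) ≤
      (Real.exp (t₁*s) - 1) * (Real.exp (t₂*x) - 1) := by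
  have hx : 0 < x := lt_of_lt_of_le hs hsx
  set F : ℝ → ℝ := fun t => (Real.exp (t*x) - 1) / (Real.exp (t*s) - 1) with hF
  have hden : ∀ t : ℝ, t₁ ≤ t → 0 < Real.exp (t*s) - 1 := fun t htt =>
    expm1_pos (mul_pos (lt_of_lt_of_le ht₁ htt) hs)
  have hmono : MonotoneOn F (Icc t₁ t₂) := by
    apply monotoneOn_of_deriv_nonneg (convex_Icc t₁ t₂)
    · apply ContinuousOn.div
      · exact (Real.continuous_exp.comp (continuous_id.mul continuous_const)).continuousOn.sub
          continuousOn_const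
      · exact (Real.continuous_exp.comp (continuous_id.mul continuous_const)).continuousOn.sub
          continuousOn_const
      · exact fun t htIcc => ne_of_gt (hden t htIcc.1)
    · intro t htI
      rw [interior_Icc] at htI
      have hne : Real.exp (t*s) - 1 ≠ 0 := ne_of_gt (hden t htI.1.le)
      have h1 : HasDerivAt (fun t : ℝ => Real.exp (t*x) - 1) (Real.exp (t*x) * (1*x)) t :=
        (((hasDerivAt_id t).mul_const x).exp).sub_const 1
      have h2 : HasDerivAt (fun t : ℝ => Real.exp (t*s) - 1) (Real.exp (t*s) * (1*s)) t :=
        (((hasDerivAt_id t).mul_const s).exp).sub_const 1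
      exact (h1.div h2 hne).differentiableAt.differentiableWithinAt
    · intro t htI
      rw [interior_Icc] at htI
      have htpos : 0 < t := lt_of_lt_of_le ht₁ htI.1.le
      have hne : Real.exp (t*s) - 1 ≠ 0 := ne_of_gt (hden t htI.1.le)
      have h1 : HasDerivAt (fun t : ℝ => Real.exp (t*x) - 1) (Real.exp (t*x) * (1*x)) t :=
        (((hasDerivAt_id t).mul_const x).exp).sub_const 1
      have h2 : HasDerivAt (fun t : ℝ => Real.exp (t*s) - 1) (Real.exp (t*s) * (1*s)) t :=
        (((hasDerivAt_id t).mul_const s).exp).sub_const 1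
      have hd := (h1.div h2 hne).deriv
      rw [show deriv F t = _ from hd]
      apply div_nonneg _ (sq_nonneg _)
      have hcore := core2 (mul_pos htpos hs) (by nlinarith : t*s ≤ t*x)
      nlinarith [hcore, htpos]
  have hle := hmono (left_mem_Icc.2 ht) (right_mem_Icc.2 ht) ht
  rw [div_le_div_iff₀ (hden t₁ le_rfl) (hden t₂ ht)] at hle
  linarith [hle]

lemma fE_prod_le {α β γ δ : ℝ} (hα : 0 < α) (hβ : 0 < β) (hγ : 0 < γ) (hδ : 0 < δ)
    (h : (Real.exp α - 1) * (Real.exp β - 1) ≤ (Real.exp γ - 1) * (Real.exp δ - 1)) :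
    fE γ * fE δ ≤ fE α * fE β := by
  unfold fE
  rw [← mul_inv, ← mul_inv]
  exact inv_anti₀ (mul_pos (expm1_pos hα) (expm1_pos hβ)) h

lemma hasDerivAt_LL {y t : ℝ} (hy : 0 < y) (ht : 0 < t) :
    HasDerivAt (fun t : ℝ => LL (t*y)) (y * fE (t*y)) t := by
  have hty : 0 < t * y := mul_pos ht hy
  have hpos : 0 < 1 - Real.exp (-(t*y)) := one_sub_exp_neg_pos hty
  have h1 : HasDerivAt (fun t : ℝ => 1 - Real.exp (-(t*y)))
      (0 - Real.exp (-(t*y)) * (-(1*y))) t :=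
    (hasDerivAt_const t 1).sub ((((hasDerivAt_id t).mul_const y).neg).exp)
  have h2 := h1.log (ne_of_gt hpos)
  convert h2 using 1
  · rfl
  have hne : Real.exp (t*y) - 1 ≠ 0 := ne_of_gt (expm1_pos hty)
  have hfe : fE (t*y) = Real.exp (-(t*y)) / (1 - Real.exp (-(t*y))) := by
    unfold fE
    rw [div_eq_inv_mul ,Real.exp_neg]
    rw [inv_eq_one_div, inv_eq_one_div]
    rw [div_mul_eq_mul_div, eq_div_iff]
    · field_simp
    · have := Real.exp_pos (t*y)
      intro hzero
      have h1e : Real.exp (t*y) = 1 := by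
        field_simp at hzero
        linarith [hzero]
      exact hne (by rw [h1e]; ring)
  rw [hfe]
  field_simp
  ring

lemma LL_mono {u v : ℝ} (hu : 0 < u) (huv : u ≤ v) : LL u ≤ LL v := by
  unfold LL
  have hv : 0 < v := lt_of_lt_of_le hu huv
  apply Real.log_le_log (one_sub_exp_neg_pos hu)
  have : Real.exp (-v) ≤ Real.exp (-u) := Real.exp_le_exp.2 (by linarith)
  linarith

lemma psi_mono {s x K K' t₁ t₂ : ℝ} (hs : 0 < s) (hx : 0 < x) (ht₁ : 0 < t₁)
    (hK : ∀ t, t₁ ≤ t → t ≤ t₂ → 0 ≤ x * fE (t*x) * K - s * fE (t*s) * K') :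
    MonotoneOn (fun t : ℝ => LL (t*x) * K - LL (t*s) * K') (Icc t₁ t₂) := by
  have hD : ∀ t : ℝ, 0 < t → HasDerivAt (fun t : ℝ => LL (t*x) * K - LL (t*s) * K')
      (x * fE (t*x) * K - s * fE (t*s) * K') t := fun t ht =>
    ((hasDerivAt_LL hx ht).mul_const K).sub ((hasDerivAt_LL hs ht).mul_const K')
  apply monotoneOn_of_deriv_nonneg (convex_Icc t₁ t₂)
  · intro t htI
    exact (hD t (lt_of_lt_of_le ht₁ htI.1)).continuousAt.continuousWithinAt
  · intro t htI
    rw [interior_Icc] at htI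
    exact (hD t (lt_of_lt_of_le ht₁ htI.1.le)).differentiableAt.differentiableWithinAt
  · intro t htI
    rw [interior_Icc] at htI
    rw [(hD t (lt_of_lt_of_le ht₁ htI.1.le)).deriv]
    exact hK t htI.1.le htI.2.le

lemma C1 {s x t₁ t₂ : ℝ} (hs : 0 < s) (hsx : s ≤ x) (ht₁ : 0 < t₁) (ht : t₁ ≤ t₂) :
    (LL (t₂*s) - LL (t₁*s)) * (x * fE (t₂*x)) ≤ (LL (t₂*x) - LL (t₁*x)) * (s * fE (t₂*s)) := by
  have hx : 0 < x := lt_of_lt_of_le hs hsx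
  have hm := psi_mono (t₂ := t₂) (K := s * fE (t₂*s)) (K' := x * fE (t₂*x)) hs hx ht₁ ?_
  · have := hm (left_mem_Icc.2 ht) (right_mem_Icc.2 ht) ht
    dsimp at this
    linarith
  · intro t htt htt2
    have htpos : 0 < t := lt_of_lt_of_le ht₁ htt
    have hr := ratio_mono hs hsx htpos htt2
    have hf := fE_prod_le (mul_pos htpos hx) (mul_pos (lt_of_lt_of_le htpos htt2) hs)
      (mul_pos htpos hs) (mul_pos (lt_of_lt_of_le htpos htt2) hx) hr
    have h1 : 0 < x * s := mul_pos hx hs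
    nlinarith [hf]

lemma C2 {s x t₁ t₂ : ℝ} (hs : 0 < s) (hsx : s ≤ x) (ht₁ : 0 < t₁) (ht : t₁ ≤ t₂) :
    (LL (t₂*x) - LL (t₁*x)) * (s * fE (t₁*s)) ≤ (LL (t₂*s) - LL (t₁*s)) * (x * fE (t₁*x)) := by
  have hx : 0 < x := lt_of_lt_of_le hs hsx
  have hm := psi_mono (s := x) (x := s) (t₂ := t₂) (K := x * fE (t₁*x)) (K' := s * fE (t₁*s))
    hx hs ht₁ ?_
  case _ =>
    have := hm (left_mem_Icc.2 ht) (right_mem_Icc.2 ht) ht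
    dsimp at this
    linarith
  case _ =>
    intro t htt htt2
    have htpos : 0 < t := lt_of_lt_of_le ht₁ htt
    have hr := ratio_mono hs hsx ht₁ htt
    have hf := fE_prod_le (mul_pos ht₁ hx) (mul_pos htpos hs)
      (mul_pos ht₁ hs) (mul_pos htpos hx) hr
    nlinarith [mul_le_mul_of_nonneg_left hf (mul_pos hs hx).le]

lemma key {p b c q s x : ℝ} (hp : 0 < p) (hpb : p ≤ b) (hbc : b ≤ c) (hcq : c ≤ q)
    (hs : 0 < s) (hsx : s ≤ x)
    (h : LL (q*s) - LL (c*s) < LL (b*s) - LL (p*s)) :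
    LL (q*x) - LL (c*x) < LL (b*x) - LL (p*x) := by
  have hx : 0 < x := lt_of_lt_of_le hs hsx
  have hb : 0 < b := lt_of_lt_of_le hp hpb
  have hc : 0 < c := lt_of_lt_of_le hb hbc
  have hq : 0 < q := lt_of_lt_of_le hc hcq
  have hI := C1 hs hsx hp hpb
  have hII := C2 hs hsx hc hcq
  have hMid : fE (b*s) * fE (c*x) ≤ fE (b*x) * fE (c*s) :=
    fE_prod_le (mul_pos hb hx) (mul_pos hc hs) (mul_pos hb hs) (mul_pos hc hx)
      (ratio_mono hs hsx hb hbc)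
  have hQ1 : 0 ≤ LL (q*s) - LL (c*s) :=
    sub_nonneg.2 (LL_mono (mul_pos hc hs) (mul_le_mul_of_nonneg_right hcq hs.le))
  have hβ1 : 0 < fE (b*s) := fE_pos (mul_pos hb hs)
  have hβ2 : 0 < fE (b*x) := fE_pos (mul_pos hb hx)
  have hγ1 : 0 < fE (c*s) := fE_pos (mul_pos hc hs)
  have hγ2 : 0 < fE (c*x) := fE_pos (mul_pos hc hx)
  set B1 := LL (b*s) - LL (p*s) with hB1d
  set B2 := LL (b*x) - LL (p*x) with hB2d
  set Q1 := LL (q*s) - LL (c*s) with hQ1d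
  set Q2 := LL (q*x) - LL (c*x) with hQ2d
  have hB1 : 0 ≤ B1 := le_trans hQ1 h.le
  have e1 : B1 * (x * fE (b*x)) * fE (c*s) ≤ B2 * (s * fE (b*s)) * fE (c*s) :=
    mul_le_mul_of_nonneg_right hI hγ1.le
  have e2 : B1 * x * (fE (b*s) * fE (c*x)) ≤ B1 * x * (fE (b*x) * fE (c*s)) :=
    mul_le_mul_of_nonneg_left hMid (by positivity)
  have e4 : Q2 * (s * fE (c*s)) * fE (b*s) ≤ Q1 * (x * fE (c*x)) * fE (b*s) :=
    mul_le_mul_of_nonneg_right hII hβ1.le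
  have hpos3 : 0 < x * fE (c*x) * fE (b*s) := by positivity
  have hpos4 : 0 < s * fE (c*s) * fE (b*s) := by positivity
  nlinarith [e1, e2, e4, mul_lt_mul_of_pos_right h hpos3, hpos4, hγ1, hβ1]

theorem stmt_16 (θ₁ θ₂ lam₁ lam₂ a : ℝ) (h0 : 0 < θ₁) (h1 : θ₁ ≤ lam₁) (h2 : lam₁ ≤ lam₂)
    (h3 : lam₂ ≤ θ₂) (hsum : lam₁ + lam₂ = θ₁ + θ₂) (ha0 : 0 < a) (ha1 : a < 1)
    (haθ : θ₁ < a * lam₁)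
    (V : ℝ → ℝ)
    (hV : ∀ x, V x = (exp (-θ₁ * x) + exp (-θ₂ * x) - exp (-(θ₁ + θ₂) * x)) -
      (exp (-lam₁ * (a * x)) + exp (-lam₂ * (a * x)) - exp (-(lam₁ + lam₂) * (a * x)))) :
    (∀ x : ℝ, 0 ≤ x → V x ≤ 0) ∨
      ∃ t : ℝ, 0 ≤ t ∧ ∀ x : ℝ, 0 ≤ x → (x < t → V x ≤ 0) ∧ (t < x → 0 ≤ V x) := by
  have hlam₂ : 0 < lam₂ := lt_of_lt_of_le h0 (h1.trans h2)
  have hpb : θ₁ ≤ a * lam₁ := haθ.le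
  have hbc : a * lam₁ ≤ a * lam₂ := mul_le_mul_of_nonneg_left h2 ha0.le
  have hcq : a * lam₂ ≤ θ₂ := by nlinarith
  -- rewrite V in product/log form
  have hVy : ∀ y : ℝ, 0 < y → V y =
      exp (LL ((a*lam₁)*y) + LL ((a*lam₂)*y)) - exp (LL (θ₁*y) + LL (θ₂*y)) := by
    intro y hy
    have hb : 0 < a * lam₁ := lt_of_lt_of_le h0 hpb
    have hc : 0 < a * lam₂ := lt_of_lt_of_le hb hbc
    have hq : 0 < θ₂ := lt_of_lt_of_le hc hcq
    have l1 : exp (LL (θ₁*y)) = 1 - exp (-(θ₁*y)) :=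
      Real.exp_log (one_sub_exp_neg_pos (mul_pos h0 hy))
    have l2 : exp (LL (θ₂*y)) = 1 - exp (-(θ₂*y)) :=
      Real.exp_log (one_sub_exp_neg_pos (mul_pos hq hy))
    have l3 : exp (LL ((a*lam₁)*y)) = 1 - exp (-((a*lam₁)*y)) :=
      Real.exp_log (one_sub_exp_neg_pos (mul_pos hb hy))
    have l4 : exp (LL ((a*lam₂)*y)) = 1 - exp (-((a*lam₂)*y)) :=
      Real.exp_log (one_sub_exp_neg_pos (mul_pos hc hy))
    rw [hV y, Real.exp_add, Real.exp_add, l1, l2, l3, l4]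
    rw [show -(θ₁+θ₂)*y = -(θ₁*y) + -(θ₂*y) by ring, Real.exp_add]
    rw [show -(lam₁+lam₂)*(a*y) = -((a*lam₁)*y) + -((a*lam₂)*y) by ring, Real.exp_add]
    rw [show -lam₁*(a*y) = -((a*lam₁)*y) by ring, show -lam₂*(a*y) = -((a*lam₂)*y) by ring,
      show -θ₁*y = -(θ₁*y) by ring, show -θ₂*y = -(θ₂*y) by ring]
    ring
  have Vkey : ∀ s x : ℝ, 0 < s → s ≤ x → 0 < V s → 0 < V x := by
    intro s x hs hsx hVs
    have hx : 0 < x := lt_of_lt_of_le hs hsx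
    rw [hVy s hs] at hVs
    rw [hVy x hx]
    rw [sub_pos, Real.exp_lt_exp] at hVs ⊢
    have := key h0 hpb hbc hcq hs hsx (by linarith)
    linarith
  have hV0 : V 0 = 0 := by
    rw [hV 0]
    norm_num
  by_cases hall : ∀ x : ℝ, 0 ≤ x → V x ≤ 0
  · exact Or.inl hall
  · right
    push_neg at hall
    obtain ⟨x₀, hx₀, hVx₀⟩ := hall
    have hx₀pos : 0 < x₀ := by
      rcases eq_or_lt_of_le hx₀ with heq | hlt
      · exfalso; rw [← heq, hV0] at hVx₀; exact lt_irrefl 0 hVx₀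
      · exact hlt
    set S : Set ℝ := {y : ℝ | 0 < y ∧ 0 < V y} with hS
    have hne : S.Nonempty := ⟨x₀, hx₀pos, hVx₀⟩
    have hbd : BddBelow S := ⟨0, fun y hy => hy.1.le⟩
    refine ⟨sInf S, le_csInf hne (fun y hy => hy.1.le), fun x hx => ⟨?_, ?_⟩⟩
    · intro hxt
      by_contra hpos
      push_neg at hpos
      have hx0 : 0 < x := by
        rcases eq_or_lt_of_le hx with heq | hlt
        · exfalso; rw [← heq, hV0] at hpos; exact lt_irrefl 0 hpos
        · exact hlt
      exact absurd (csInf_le hbd ⟨hx0, hpos⟩) (not_le.mpr hxt)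
    · intro htx
      obtain ⟨s, hsS, hst⟩ := exists_lt_of_csInf_lt hne htx
      exact (Vkey s x hsS.1 hst.le hsS.2).le
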